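/- On the sphere S², combining the spinor decomposition ψ_{l,n} = √(2π(l−n)/l)·Y⁰_{l−1/2,n+1/2}·ψ_{1/2,−1/2} + √(2π(l+n)/l)·Y⁰_{l−1/2,n−1/2}·ψ_{1/2,1/2} with the matrix element formulas ⟨Γ·Y⁰_{l,n}ψ_{1/2,±1/2}, 𝔏_{X_h}ψ_{1/2,±1/2}⟩_{L²} = (i/16π)[l(l+1) ∓ 2n]·⟨Y⁰_{l,n}, h⟩_{L²} and ⟨Γ·Y⁰_{l,n}ψ_{1/2,±1/2}, 𝔏_{X_h}ψ_{1/2,∓1/2}⟩_{L²} = −(i/8π)√((l∓n)(l±n+1))·⟨Y⁰_{l,n±1}, h⟩_{L²}, one obtains ⟨ψ⁺_{l,n}, 𝔏_{X_h}ψ⁺_{1/2,1/2}⟩ − ⟨ψ⁻_{l,n}, 𝔏_{X_h}ψ⁻_{1/2,1/2}⟩ = (i/8)·√((l+n)/(2πl))·(l − 3/2)(l − 1/2)·⟨Y⁰_{l−1/2,n−1/2}, h⟩_{L²}. -/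

import Mathlib

open Complex

local notation "⟪" x ", " y "⟫" => @inner ℂ _ _ x y

/-- Combination of the spinor decomposition on `S²` with the matrix-element formulas,
yielding the chiral asymmetry coefficient.

`V` is the (L²) space of spinors on `S²` with its complex inner product; `Γ` is the
chirality operator, with chiral projections `χ^± = (1/2)(1±Γ)χ` and the identity
`⟨Γφ, Lψ⟩ = ⟨φ⁺, Lψ⁺⟩ − ⟨φ⁻, Lψ⁻⟩` for the operator `L = 𝔏_{X_h}`; `M a b` is the
operator of multiplication by the scalar spherical harmonic `Y⁰_{a,b}`; `ψp`, `ψm` are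
the Killing spinors `ψ_{1/2,±1/2}`; `ψln` is the eigenspinor `ψ_{l,n}`; and
`H a b = ⟨Y⁰_{a,b}, h⟩_{L²}`.

Hypotheses: the decomposition
`ψ_{l,n} = √(2π(l−n)/l)·Y⁰_{l−1/2,n+1/2}·ψ_{1/2,−1/2} + √(2π(l+n)/l)·Y⁰_{l−1/2,n−1/2}·ψ_{1/2,1/2}`
and the matrix-element formulas
`⟨Γ·Y⁰_{a,b}ψ_{1/2,±1/2}, 𝔏_{X_h}ψ_{1/2,±1/2}⟩ = (i/16π)[a(a+1) ∓ 2b]·⟨Y⁰_{a,b}, h⟩`,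
`⟨Γ·Y⁰_{a,b}ψ_{1/2,±1/2}, 𝔏_{X_h}ψ_{1/2,∓1/2}⟩ = −(i/8π)√((a∓b)(a±b+1))·⟨Y⁰_{a,b±1}, h⟩`.

Conclusion:
`⟨ψ⁺_{l,n}, 𝔏ψ⁺_{1/2,1/2}⟩ − ⟨ψ⁻_{l,n}, 𝔏ψ⁻_{1/2,1/2}⟩
  = (i/8)·√((l+n)/(2πl))·(l−3/2)(l−1/2)·⟨Y⁰_{l−1/2,n−1/2}, h⟩`. -/
theorem sphere_chiral_asymmetry {V : Type*} [NormedAddCommGroup V] [InnerProductSpace ℂ V]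
    (L Γ : V →ₗ[ℂ] V) (M : ℝ → ℝ → V →ₗ[ℂ] V) (H : ℝ → ℝ → ℂ)
    (ψp ψm ψln : V) (l n : ℝ)
    (hl : 0 < l) (hn₁ : -l ≤ n) (hn₂ : n ≤ l)
    (hchir : ∀ φ χ : V,
      ⟪(1 / 2 : ℂ) • (φ + Γ φ), L ((1 / 2 : ℂ) • (χ + Γ χ))⟫ -
        ⟪(1 / 2 : ℂ) • (φ - Γ φ), L ((1 / 2 : ℂ) • (χ - Γ χ))⟫ = ⟪Γ φ, L χ⟫)
    (hdec : ψln =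
      ((Real.sqrt (2 * Real.pi * (l - n) / l) : ℝ) : ℂ) • M (l - 1/2) (n + 1/2) ψm +
      ((Real.sqrt (2 * Real.pi * (l + n) / l) : ℝ) : ℂ) • M (l - 1/2) (n - 1/2) ψp)
    (hmePP : ∀ a b : ℝ, ⟪Γ (M a b ψp), L ψp⟫ =
      I / (16 * (Real.pi : ℂ)) * ((a : ℂ) * (a + 1) - 2 * b) * H a b)
    (hmeMM : ∀ a b : ℝ, ⟪Γ (M a b ψm), L ψm⟫ =
      I / (16 * (Real.pi : ℂ)) * ((a : ℂ) * (a + 1) + 2 * b) * H a b)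
    (hmePM : ∀ a b : ℝ, ⟪Γ (M a b ψp), L ψm⟫ =
      -(I / (8 * (Real.pi : ℂ))) * ((Real.sqrt ((a - b) * (a + b + 1)) : ℝ) : ℂ) * H a (b + 1))
    (hmeMP : ∀ a b : ℝ, ⟪Γ (M a b ψm), L ψp⟫ =
      -(I / (8 * (Real.pi : ℂ))) * ((Real.sqrt ((a + b) * (a - b + 1)) : ℝ) : ℂ) * H a (b - 1)) :
    ⟪(1 / 2 : ℂ) • (ψln + Γ ψln), L ((1 / 2 : ℂ) • (ψp + Γ ψp))⟫ -
      ⟪(1 / 2 : ℂ) • (ψln - Γ ψln), L ((1 / 2 : ℂ) • (ψp - Γ ψp))⟫ =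
    I / 8 * ((Real.sqrt ((l + n) / (2 * Real.pi * l)) : ℝ) : ℂ) *
      ((l : ℂ) - 3/2) * ((l : ℂ) - 1/2) * H (l - 1/2) (n - 1/2) := by
  have hπ := Real.pi_pos
  have hln : (0:ℝ) ≤ l - n := by linarith
  have hlpn : (0:ℝ) ≤ l + n := by linarith
  have key1 : Real.sqrt (2*Real.pi*(l-n)/l) * Real.sqrt ((l - 1/2 + (n + 1/2)) * (l - 1/2 - (n + 1/2) + 1))
      = 2*Real.pi*(l-n) * Real.sqrt ((l+n)/(2*Real.pi*l)) := by
    rw [show (l - 1/2 + (n + 1/2)) * (l - 1/2 - (n + 1/2) + 1) = (l+n)*(l-n) by ring,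
      ← Real.sqrt_mul (div_nonneg (mul_nonneg (by positivity) hln) hl.le),
      show 2*Real.pi*(l-n)/l * ((l+n)*(l-n)) = (2*Real.pi*(l-n))^2 * ((l+n)/(2*Real.pi*l)) by
        field_simp,
      Real.sqrt_mul (sq_nonneg _), Real.sqrt_sq (mul_nonneg (by positivity) hln)]
  have key2 : Real.sqrt (2*Real.pi*(l+n)/l) = 2*Real.pi * Real.sqrt ((l+n)/(2*Real.pi*l)) := by
    rw [show 2*Real.pi*(l+n)/l = (2*Real.pi)^2 * ((l+n)/(2*Real.pi*l)) by field_simp,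
      Real.sqrt_mul (sq_nonneg _), Real.sqrt_sq (by positivity)]
  have c1 := congrArg (Complex.ofReal) key1
  have c2 := congrArg (Complex.ofReal) key2
  push_cast at c1 c2
  have hπc : (Real.pi : ℂ) ≠ 0 := by exact_mod_cast Real.pi_ne_zero
  have hinv : (Real.pi : ℂ) * (Real.pi : ℂ)⁻¹ = 1 := mul_inv_cancel₀ hπc
  rw [hchir, hdec, map_add, map_smul, map_smul, inner_add_left, inner_smul_left,
    inner_smul_left, Complex.conj_ofReal, Complex.conj_ofReal, hmeMP, hmePP,
    show n + 1/2 - 1 = n - 1/2 by ring, c2]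
  push_cast
  linear_combination (-(I/(8*(Real.pi:ℂ))) * H (l - 1/2) (n - 1/2)) * c1 +
    (I/8 * ((Real.sqrt ((l + n) / (2 * Real.pi * l)) : ℝ) : ℂ) *
      ((l:ℂ) - 3/2) * ((l:ℂ) - 1/2) * H (l - 1/2) (n - 1/2)) * hinv
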